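/- If a sequence (d_n) of nonzero rational (or field) elements satisfies d_{n+1} d_{n-1} d_n^2 = α d_n + β for all n, and τ_n is a sequence of nonzero elements with d_n = τ_n τ_{n-2} / τ_{n-1}^2 for all n, then τ_n satisfies the Somos-4 recurrence τ_{n+2} τ_{n-2} = α τ_{n+1} τ_{n-1} + β τ_n^2 for all n. -/

import Mathlib

/-- If `d n = τ n * τ (n-2) / τ (n-1)^2` with all `τ n ≠ 0`, and `d` satisfies
`d (n+1) * d (n-1) * (d n)^2 = α * d n + β`, then `τ` satisfies the Somos-4 recurrence. -/
theorem somos4_from_qrt {K : Type*} [Field K] (α β : K) (d τ : ℤ → K)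
    (hτ : ∀ n, τ n ≠ 0)
    (hd : ∀ n, d n = τ n * τ (n - 2) / (τ (n - 1)) ^ 2)
    (hqrt : ∀ n, d (n + 1) * d (n - 1) * (d n) ^ 2 = α * d n + β) :
    ∀ n : ℤ, τ (n + 2) * τ (n - 2) = α * τ (n + 1) * τ (n - 1) + β * (τ n) ^ 2 := by
  intro n
  have h := hqrt (n + 1)
  rw [hd (n + 1 + 1), hd (n + 1 - 1), hd (n + 1), show n + 1 + 1 - 2 = n by ring,
    show n + 1 + 1 - 1 = n + 1 by ring, show n + 1 - 1 = n by ring,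
    show n + 1 - 2 = n - 1 by ring, show n + 1 + 1 = n + 2 by ring] at h
  have h0 := hτ n
  have h1 := hτ (n + 1)
  have h2 := hτ (n - 1)
  field_simp at h
  have key : τ (n + 2) * τ (n - 2) * (τ n ^ 4 * τ (n + 1) ^ 2 * τ (n - 1) ^ 2) =
      (α * τ (n + 1) * τ (n - 1) + β * τ n ^ 2) * (τ n ^ 4 * τ (n + 1) ^ 2 * τ (n - 1) ^ 2) := by
    linear_combination (τ n ^ 4 * τ (n + 1) ^ 2 * τ (n - 1) ^ 2) * h
  exact mul_right_cancel₀ (by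
    exact mul_ne_zero (mul_ne_zero (pow_ne_zero _ h0) (pow_ne_zero _ h1)) (pow_ne_zero _ h2)) key
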